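/- Let η > 0 and γ ≥ 0, and let x_z : ℝ → ℝ be differentiable with |x_z'(t)| ≤ γ for all t. Let x_s : [t₀, ∞) → ℝ be differentiable and satisfy the stable LIP subsystem dynamics x_s'(t) = −η(x_s(t) − x_z(t)) for all t ≥ t₀. Then x_s − x_z is bounded on [t₀, ∞); more precisely, |x_s(t) − x_z(t)| ≤ max(|x_s(t₀) − x_z(t₀)|, γ/η) for all t ≥ t₀. -/

import Mathlib

open Real

/-- BIBO stability of the stable LIP subsystem. If
`x_s' = −η(x_s − x_z)` for `t ≥ t₀` and `|x_z'| ≤ γ`, then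
`|x_s(t) − x_z(t)| ≤ max(|x_s(t₀) − x_z(t₀)|, γ/η)` for all `t ≥ t₀`. -/
theorem stmt_18 (η γ t₀ : ℝ) (hη : 0 < η) (hγ : 0 ≤ γ)
    (xz xs : ℝ → ℝ)
    (hxz : Differentiable ℝ xz) (hxz' : ∀ t, |deriv xz t| ≤ γ)
    (hode : ∀ t, t₀ ≤ t → HasDerivAt xs (-η * (xs t - xz t)) t) :
    ∀ t, t₀ ≤ t → |xs t - xz t| ≤ max |xs t₀ - xz t₀| (γ / η) := by
  intro t ht
  set e : ℝ → ℝ := fun s => xs s - xz s with he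
  set M : ℝ := max |xs t₀ - xz t₀| (γ / η) with hM
  have hMγ : γ ≤ η * M := by
    have : γ / η ≤ M := le_max_right _ _
    calc γ = η * (γ / η) := by field_simp
    _ ≤ η * M := by nlinarith
  have hde : ∀ x, t₀ ≤ x →
      HasDerivAt e (-η * (xs x - xz x) - deriv xz x) x := fun x hx =>
    (hode x hx).sub (hxz x).hasDerivAt
  have hcont : ContinuousOn e (Set.Icc t₀ t) := fun x hx =>
    ((hde x hx.1).continuousAt).continuousWithinAt
  -- For every r > 0, |e t| ≤ M + r
  have key : ∀ r : ℝ, 0 < r → |e t| ≤ M + r := by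
    intro r hr
    -- upper bound
    have hup : e t ≤ M + r := by
      have := image_le_of_deriv_right_lt_deriv_boundary
        (f := e) (f' := fun x => -η * (xs x - xz x) - deriv xz x)
        (B := fun _ => M + r) (B' := fun _ => 0)
        hcont (fun x hx => (hde x hx.1).hasDerivWithinAt)
        (by
          have h0 : |e t₀| ≤ M := le_max_left _ _
          have := (abs_le.mp h0).2
          simpa using this.trans (by linarith))
        (fun x => hasDerivAt_const x _)
        (fun x hx hex => by
          have h3 := (abs_le.mp (hxz' x)).1
          have hex' : xs x - xz x = M + r := hex
          show -η * (xs x - xz x) - deriv xz x < 0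
          rw [hex']
          nlinarith [mul_pos hη hr])
        (Set.right_mem_Icc.mpr ht)
      simpa using this
    -- lower bound
    have hlo : -(M + r) ≤ e t := by
      have := image_le_of_deriv_right_lt_deriv_boundary
        (f := fun s => -e s) (f' := fun x => -(-η * (xs x - xz x) - deriv xz x))
        (B := fun _ => M + r) (B' := fun _ => 0)
        (hcont.neg) (fun x hx => ((hde x hx.1).neg).hasDerivWithinAt)
        (by
          have h0 : |e t₀| ≤ M := le_max_left _ _
          have h1 := (abs_le.mp h0).1
          show -e t₀ ≤ M + r
          linarith)
        (fun x => hasDerivAt_const x _)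
        (fun x hx hex => by
          have h2 := (abs_le.mp (hxz' x)).2
          have hex' : -(xs x - xz x) = M + r := hex
          show -(-η * (xs x - xz x) - deriv xz x) < 0
          have hx2 : xs x - xz x = -(M + r) := by linarith
          rw [hx2]
          nlinarith [mul_pos hη hr])
        (Set.right_mem_Icc.mpr ht)
      have h := this
      linarith
    exact abs_le.mpr ⟨hlo, hup⟩
  -- take r → 0
  have : |e t| ≤ M := by
    by_contra h
    push_neg at h
    have hr := key ((|e t| - M) / 2) (by linarith)
    linarith
  exact this
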